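/- Let (w_0,…,w_{2n} | a_0,…,a_{2n}) be a rational solution of a (2n+1)-cyclic dressing chain with shift Δ ≠ 0, with each w_i + w_{i+1} not identically zero, and let ζ ∈ ℂ be a pole of some w_i. Write, for each j = 0,…,2n, w_j(z) = m_j/(z − ζ) + g_j(z) with m_j ∈ ℤ and g_j analytic at ζ. Then for every j and every integer ℓ with 0 ≤ ℓ ≤ |m_j| − 1, the even-order derivative g_j^{(2ℓ)}(ζ) vanishes. (Equivalently: Res_ζ w_j^{2r} = 0 for r = 1,…,|m_j|.) -/

import Mathlib

open Filter Topology

namespace DCaux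


lemma itD_zero (n : ℕ) (x : ℂ) : iteratedDeriv n (fun _ : ℂ => (0:ℂ)) x = 0 := by
  induction n generalizing x with
  | zero => simp
  | succ k ih =>
    rw [iteratedDeriv_succ']
    simpa using ih x

lemma itD_const (c : ℂ) (n : ℕ) (x : ℂ) :
    iteratedDeriv n (fun _ : ℂ => c) x = if n = 0 then c else 0 := by
  cases n with
  | zero => simp
  | succ k =>
    rw [iteratedDeriv_succ']
    simpa using itD_zero k x

lemma analyticAt_deriv {f : ℂ → ℂ} {x : ℂ} (h : AnalyticAt ℂ f x) :
    AnalyticAt ℂ (deriv f) x := by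
  have h1 := h.fderiv
  have h2 : deriv f = fun z => (ContinuousLinearMap.apply ℂ ℂ (1:ℂ)) (fderiv ℂ f z) := by
    ext z; simp [fderiv_apply_one_eq_deriv]
  rw [h2]
  exact ((ContinuousLinearMap.apply ℂ ℂ (1:ℂ)).analyticAt _).comp h1

lemma analyticAt_itD {f : ℂ → ℂ} {x : ℂ} (n : ℕ) (h : AnalyticAt ℂ f x) :
    AnalyticAt ℂ (iteratedDeriv n f) x := by
  induction n generalizing f with
  | zero => simpa using h
  | succ k ih =>
    rw [iteratedDeriv_succ']
    exact ih (analyticAt_deriv h)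

lemma ev_deriv_congr {F G : ℂ → ℂ} {x : ℂ} (h : ∀ᶠ y in 𝓝 x, F y = G y) :
    ∀ᶠ y in 𝓝 x, deriv F y = deriv G y := by
  filter_upwards [h.eventually_nhds] with y hy using Filter.EventuallyEq.deriv_eq hy

lemma ev_add {f g : ℂ → ℂ} {x : ℂ} (hf : AnalyticAt ℂ f x) (hg : AnalyticAt ℂ g x) (n : ℕ) :
    ∀ᶠ y in 𝓝 x, iteratedDeriv n (fun z => f z + g z) y
      = iteratedDeriv n f y + iteratedDeriv n g y := by
  induction n with
  | zero => simp
  | succ k ih =>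
    filter_upwards [ev_deriv_congr ih, hf.eventually_analyticAt, hg.eventually_analyticAt]
      with y h1 h2 h3
    rw [iteratedDeriv_succ, h1, iteratedDeriv_succ, iteratedDeriv_succ]
    exact deriv_add (analyticAt_itD k h2).differentiableAt (analyticAt_itD k h3).differentiableAt

lemma ev_smul {f : ℂ → ℂ} {x : ℂ} (c : ℂ) (hf : AnalyticAt ℂ f x) (n : ℕ) :
    ∀ᶠ y in 𝓝 x, iteratedDeriv n (fun z => c * f z) y = c * iteratedDeriv n f y := by
  induction n with
  | zero => simp
  | succ k ih =>
    filter_upwards [ev_deriv_congr ih, hf.eventually_analyticAt] with y h1 h2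
    rw [iteratedDeriv_succ, h1, iteratedDeriv_succ]
    exact deriv_const_mul c (analyticAt_itD k h2).differentiableAt

lemma choose_shuffle (F G : ℕ → ℂ) (n : ℕ) :
    ∑ k ∈ Finset.range (n+1), (n.choose k : ℂ) *
        (F (k+1) * G (n-k) + F k * G (n-k+1))
    = ∑ k ∈ Finset.range (n+2), ((n+1).choose k : ℂ) * F k * G (n+1-k) := by
  have hR : ∑ k ∈ Finset.range (n+2), ((n+1).choose k : ℂ) * F k * G (n+1-k)
      = ∑ k ∈ Finset.range (n+1), ((n.choose k : ℂ) + (n.choose (k+1) : ℂ))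
          * (F (k+1) * G (n-k)) + F 0 * G (n+1) := by
    rw [Finset.sum_range_succ' (fun k => ((n+1).choose k : ℂ) * F k * G (n+1-k)) (n+1)]
    congr 1
    · apply Finset.sum_congr rfl
      intro k hk
      have hk' : k ≤ n := Nat.lt_succ_iff.mp (Finset.mem_range.mp hk)
      have e1 : n + 1 - (k+1) = n - k := by omega
      rw [e1, Nat.choose_succ_succ n k]
      push_cast
      ring
    · simp
  have hL : ∑ k ∈ Finset.range (n+1), (n.choose k : ℂ) * (F k * G (n-k+1))
      = ∑ k ∈ Finset.range (n+1), (n.choose (k+1) : ℂ) * (F (k+1) * G (n-k)) + F 0 * G (n+1) := by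
    rw [Finset.sum_range_succ' (fun k => (n.choose k : ℂ) * (F k * G (n-k+1))) n]
    congr 1
    · rw [Finset.sum_range_succ]
      simp only [Nat.choose_succ_self, Nat.cast_zero, zero_mul, add_zero]
      apply Finset.sum_congr rfl
      intro k hk
      have hk' : k < n := Finset.mem_range.mp hk
      have e1 : n - (k+1) + 1 = n - k := by omega
      rw [e1]
    · simp
  calc ∑ k ∈ Finset.range (n+1), (n.choose k : ℂ) * (F (k+1) * G (n-k) + F k * G (n-k+1))
      = ∑ k ∈ Finset.range (n+1), (n.choose k : ℂ) * (F (k+1) * G (n-k))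
        + ∑ k ∈ Finset.range (n+1), (n.choose k : ℂ) * (F k * G (n-k+1)) := by
        rw [← Finset.sum_add_distrib]
        apply Finset.sum_congr rfl
        intro k _
        ring
    _ = ∑ k ∈ Finset.range (n+2), ((n+1).choose k : ℂ) * F k * G (n+1-k) := by
        rw [hL, hR, ← add_assoc, ← Finset.sum_add_distrib]
        congr 1
        apply Finset.sum_congr rfl
        intro k _
        ring

lemma ev_mul {f g : ℂ → ℂ} {x : ℂ} (hf : AnalyticAt ℂ f x) (hg : AnalyticAt ℂ g x) (n : ℕ) :
    ∀ᶠ y in 𝓝 x, iteratedDeriv n (fun z => f z * g z) y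
      = ∑ k ∈ Finset.range (n+1), (n.choose k : ℂ) *
          iteratedDeriv k f y * iteratedDeriv (n-k) g y := by
  induction n with
  | zero => simp
  | succ N ih =>
    filter_upwards [ev_deriv_congr ih, hf.eventually_analyticAt, hg.eventually_analyticAt]
      with y h1 h2 h3
    rw [iteratedDeriv_succ, h1]
    have hD : HasDerivAt (fun z => ∑ k ∈ Finset.range (N+1), (N.choose k : ℂ) *
          iteratedDeriv k f z * iteratedDeriv (N-k) g z)
        (∑ k ∈ Finset.range (N+1), (N.choose k : ℂ) *
          (iteratedDeriv (k+1) f y * iteratedDeriv (N-k) g y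
            + iteratedDeriv k f y * iteratedDeriv (N-k+1) g y)) y := by
      apply HasDerivAt.fun_sum
      intro k _
      have hfk : HasDerivAt (iteratedDeriv k f) (iteratedDeriv (k+1) f y) y := by
        rw [iteratedDeriv_succ]
        exact (analyticAt_itD k h2).differentiableAt.hasDerivAt
      have hgk : HasDerivAt (iteratedDeriv (N-k) g) (iteratedDeriv (N-k+1) g y) y := by
        rw [iteratedDeriv_succ]
        exact (analyticAt_itD (N-k) h3).differentiableAt.hasDerivAt
      have := (hfk.fun_mul hgk).const_mul ((N.choose k : ℂ))
      convert this using 1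
      all_goals first | (ext z; ring) | ring
    rw [hD.deriv]
    rw [choose_shuffle (fun k => iteratedDeriv k f y) (fun k => iteratedDeriv k g y) N]


lemma itD_sub_const (x c : ℂ) (k : ℕ) :
    iteratedDeriv k (fun z : ℂ => z - c) x = if k = 0 then x - c else if k = 1 then 1 else 0 := by
  match k with
  | 0 => simp
  | 1 => simp [iteratedDeriv_one]
  | (k+2) =>
    rw [iteratedDeriv_succ']
    have : (deriv fun z : ℂ => z - c) = fun _ : ℂ => (1:ℂ) := by
      ext z
      simp
    rw [this]
    simp [itD_const]

lemma itD_lin_mul {F : ℂ → ℂ} {x : ℂ} (hF : AnalyticAt ℂ F x) (d : ℕ) :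
    iteratedDeriv d (fun z => (z - x) * F z) x = (d : ℂ) * iteratedDeriv (d-1) F x := by
  have alin : AnalyticAt ℂ (fun z : ℂ => z - x) x := by
    have := (analyticAt_id (𝕜 := ℂ) (z := x)).fun_sub (analyticAt_const (v := x))
    simpa using this
  have h := (ev_mul alin hF d).self_of_nhds
  rw [h]
  rcases Nat.eq_zero_or_pos d with hd | hd
  · subst hd; simp [itD_sub_const]
  · rw [Finset.sum_eq_single 1]
    · rw [itD_sub_const]
      simp
    · intro k hk hk1
      rcases Nat.eq_zero_or_pos k with h0 | h0
      · subst h0; rw [itD_sub_const]; simp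
      · have : ¬ (k = 0) ∧ ¬ (k = 1) := ⟨by omega, hk1⟩
        rw [itD_sub_const]
        simp [this.1, this.2]
    · intro h1
      exact absurd (Finset.mem_range.mpr (by omega)) h1

/-- Core local computation for one link of the dressing chain. -/
lemma dressing_core (ζ A : ℂ) (M1 M2 : ℤ) (G1 G2 W : ℂ → ℂ)
    (hG1 : AnalyticAt ℂ G1 ζ) (hG2 : AnalyticAt ℂ G2 ζ)
    (hW : ∀ᶠ z in nhdsWithin ζ {ζ}ᶜ,
      W z = (M1:ℂ)/(z-ζ) + G1 z + ((M2:ℂ)/(z-ζ) + G2 z))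
    (hch : ∀ᶠ z in nhdsWithin ζ {ζ}ᶜ,
      deriv W z + ((M2:ℂ)/(z-ζ) + G2 z)^2 - ((M1:ℂ)/(z-ζ) + G1 z)^2 = A) :
    (M2^2 - M1^2 - M1 - M2 : ℤ) = 0 ∧
    ∀ d : ℕ, d ≠ 1 →
      (2*(M2:ℂ) + (d:ℂ)) * iteratedDeriv d G2 ζ
      + ((d:ℂ) - 2*(M1:ℂ)) * iteratedDeriv d G1 ζ
      + (d:ℂ) * ((∑ k ∈ Finset.range d,
            ((d-1).choose k : ℂ) * iteratedDeriv k G2 ζ * iteratedDeriv (d-1-k) G2 ζ)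
         - (∑ k ∈ Finset.range d,
            ((d-1).choose k : ℂ) * iteratedDeriv k G1 ζ * iteratedDeriv (d-1-k) G1 ζ)) = 0 := by
  -- derivative replacement
  have hB : ∀ᶠ z in nhdsWithin ζ {ζ}ᶜ,
      deriv W z = -((M1:ℂ)+(M2:ℂ))/(z-ζ)^2 + (deriv G1 z + deriv G2 z) := by
    rw [eventually_nhdsWithin_iff] at hW ⊢
    filter_upwards [hW.eventually_nhds, hG1.eventually_analyticAt, hG2.eventually_analyticAt]
      with z hWz hA1 hA2 hzmem
    have hz : z ≠ ζ := hzmem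
    have hEq : W =ᶠ[𝓝 z] fun t => (M1:ℂ)/(t-ζ) + G1 t + ((M2:ℂ)/(t-ζ) + G2 t) := by
      filter_upwards [hWz, eventually_ne_nhds hz] with y h1 h2 using h1 h2
    rw [hEq.deriv_eq]
    have hzne : z - ζ ≠ 0 := sub_ne_zero.mpr hz
    have hsub : HasDerivAt (fun t : ℂ => t - ζ) 1 z := (hasDerivAt_id z).sub_const ζ
    have hinv : HasDerivAt (fun t : ℂ => (t - ζ)⁻¹) (-1/(z-ζ)^2) z := by
      simpa using hsub.fun_inv hzne
    have h1 : HasDerivAt (fun t : ℂ => (M1:ℂ)/(t-ζ)) ((M1:ℂ) * (-1/(z-ζ)^2)) z := by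
      simpa [div_eq_mul_inv] using hinv.const_mul (M1:ℂ)
    have h2 : HasDerivAt (fun t : ℂ => (M2:ℂ)/(t-ζ)) ((M2:ℂ) * (-1/(z-ζ)^2)) z := by
      simpa [div_eq_mul_inv] using hinv.const_mul (M2:ℂ)
    have hg1d : HasDerivAt G1 (deriv G1 z) z := hA1.differentiableAt.hasDerivAt
    have hg2d : HasDerivAt G2 (deriv G2 z) z := hA2.differentiableAt.hasDerivAt
    have htot := (h1.fun_add hg1d).fun_add (h2.fun_add hg2d)
    rw [htot.deriv]
    ring
  -- the analytic function H
  set H : ℂ → ℂ := fun z =>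
    ((2*(M2:ℂ)) * G2 z + (-2*(M1:ℂ)) * G1 z) +
    ((z - ζ) * ((G2 z * G2 z + (-1:ℂ) * (G1 z * G1 z)) + ((deriv G1 z + deriv G2 z) + (-A))))
    with hHdef
  set K : ℂ := (M2:ℂ)^2 - (M1:ℂ)^2 - (M1:ℂ) - (M2:ℂ) with hKdef
  have an_G1d : AnalyticAt ℂ (deriv G1) ζ := analyticAt_deriv hG1
  have an_G2d : AnalyticAt ℂ (deriv G2) ζ := analyticAt_deriv hG2
  have an_F3 : AnalyticAt ℂ (fun z => (G2 z * G2 z + (-1:ℂ) * (G1 z * G1 z))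
      + ((deriv G1 z + deriv G2 z) + (-A))) ζ := by
    exact ((hG2.mul hG2).add (analyticAt_const.mul (hG1.mul hG1))).add
      ((an_G1d.add an_G2d).add analyticAt_const)
  have an_lin : AnalyticAt ℂ (fun z : ℂ => z - ζ) ζ := by
    have := (analyticAt_id (𝕜 := ℂ) (z := ζ)).fun_sub (analyticAt_const (v := ζ))
    simpa using this
  have an_F2 : AnalyticAt ℂ (fun z => (z - ζ) * ((G2 z * G2 z + (-1:ℂ) * (G1 z * G1 z))
      + ((deriv G1 z + deriv G2 z) + (-A)))) ζ := an_lin.mul an_F3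
  have an_F1 : AnalyticAt ℂ (fun z => (2*(M2:ℂ)) * G2 z + (-2*(M1:ℂ)) * G1 z) ζ :=
    (analyticAt_const.mul hG2).add (analyticAt_const.mul hG1)
  have an_H : AnalyticAt ℂ H ζ := an_F1.add an_F2
  -- Φ vanishes on a punctured neighborhood
  have hΦ0 : ∀ᶠ z in nhdsWithin ζ {ζ}ᶜ, K + (z - ζ) * H z = 0 := by
    filter_upwards [hch, hB, self_mem_nhdsWithin] with z h1 h2 hzmem
    have hz : z ≠ ζ := hzmem
    have hzne : z - ζ ≠ 0 := sub_ne_zero.mpr hz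
    rw [h2] at h1
    field_simp at h1
    rw [hHdef, hKdef]
    linear_combination h1
  -- K = 0
  have hΦnb : ∀ᶠ z in 𝓝 ζ, K + (z - ζ) * H z = 0 := by
    have anΦ : AnalyticAt ℂ (fun z => K + (z - ζ) * H z) ζ :=
      analyticAt_const.add (an_lin.mul an_H)
    exact anΦ.frequently_zero_iff_eventually_zero.mp
      (hΦ0.frequently)
  have hK : K = 0 := by
    have := hΦnb.self_of_nhds
    simpa using this
  have hM : (M2^2 - M1^2 - M1 - M2 : ℤ) = 0 := by
    have : ((M2^2 - M1^2 - M1 - M2 : ℤ) : ℂ) = 0 := by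
      push_cast
      rw [hKdef] at hK
      linear_combination hK
    exact_mod_cast this
  refine ⟨hM, ?_⟩
  -- H vanishes near ζ
  have hH0 : H =ᶠ[𝓝 ζ] fun _ => (0:ℂ) := by
    have hfreq : ∀ᶠ z in nhdsWithin ζ {ζ}ᶜ, H z = 0 := by
      filter_upwards [hΦ0, self_mem_nhdsWithin] with z h1 hzmem
      have hzne : z - ζ ≠ 0 := sub_ne_zero.mpr hzmem
      rw [hK, zero_add] at h1
      exact (mul_eq_zero.mp h1).resolve_left hzne
    exact an_H.frequently_zero_iff_eventually_zero.mp hfreq.frequently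
  have hHd : ∀ k : ℕ, iteratedDeriv k H ζ = 0 := by
    intro k
    rw [hH0.iteratedDeriv_eq k]
    exact itD_zero k ζ
  -- coefficient extraction
  intro d hd1
  have E0 : iteratedDeriv d H ζ
      = iteratedDeriv d (fun z => (2*(M2:ℂ)) * G2 z + (-2*(M1:ℂ)) * G1 z) ζ
      + iteratedDeriv d (fun z => (z - ζ) * ((G2 z * G2 z + (-1:ℂ) * (G1 z * G1 z))
          + ((deriv G1 z + deriv G2 z) + (-A)))) ζ :=
    (ev_add an_F1 an_F2 d).self_of_nhds
  have E1 : iteratedDeriv d (fun z => (2*(M2:ℂ)) * G2 z + (-2*(M1:ℂ)) * G1 z) ζ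
      = (2*(M2:ℂ)) * iteratedDeriv d G2 ζ + (-2*(M1:ℂ)) * iteratedDeriv d G1 ζ := by
    rw [(ev_add (analyticAt_const.fun_mul hG2) (analyticAt_const.fun_mul hG1) d).self_of_nhds,
      (ev_smul (2*(M2:ℂ)) hG2 d).self_of_nhds, (ev_smul (-2*(M1:ℂ)) hG1 d).self_of_nhds]
  have E2 : iteratedDeriv d (fun z => (z - ζ) * ((G2 z * G2 z + (-1:ℂ) * (G1 z * G1 z))
          + ((deriv G1 z + deriv G2 z) + (-A)))) ζ
      = (d:ℂ) * iteratedDeriv (d-1) (fun z => (G2 z * G2 z + (-1:ℂ) * (G1 z * G1 z))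
          + ((deriv G1 z + deriv G2 z) + (-A))) ζ := itD_lin_mul an_F3 d
  rcases Nat.eq_zero_or_pos d with hd0 | hdpos
  · -- d = 0 case
    subst hd0
    have h := hHd 0
    rw [E0, E1, E2] at h
    simp only [Finset.range_zero, Finset.sum_empty, Nat.cast_zero, zero_mul, add_zero,
      sub_zero, mul_zero] at h ⊢
    linear_combination h
  · -- d ≥ 2
    obtain ⟨e, rfl⟩ : ∃ e, d = e + 1 := ⟨d - 1, by omega⟩
    have he1 : 1 ≤ e := by omega
    have he0 : ¬ (e = 0) := by omega
    have an_S1 : AnalyticAt ℂ (fun z => G2 z * G2 z) ζ := hG2.mul hG2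
    have an_S2 : AnalyticAt ℂ (fun z => (-1:ℂ) * (G1 z * G1 z)) ζ :=
      analyticAt_const.mul (hG1.mul hG1)
    have an_S12 : AnalyticAt ℂ (fun z => G2 z * G2 z + (-1:ℂ) * (G1 z * G1 z)) ζ :=
      an_S1.add an_S2
    have an_S3 : AnalyticAt ℂ (fun z => deriv G1 z + deriv G2 z) ζ := an_G1d.add an_G2d
    have an_S34 : AnalyticAt ℂ (fun z => (deriv G1 z + deriv G2 z) + (-A)) ζ :=
      an_S3.add analyticAt_const
    have T1 : iteratedDeriv e (fun z => (G2 z * G2 z + (-1:ℂ) * (G1 z * G1 z))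
          + ((deriv G1 z + deriv G2 z) + (-A))) ζ
        = iteratedDeriv e (fun z => G2 z * G2 z + (-1:ℂ) * (G1 z * G1 z)) ζ
          + iteratedDeriv e (fun z => (deriv G1 z + deriv G2 z) + (-A)) ζ :=
      (ev_add an_S12 an_S34 e).self_of_nhds
    have T2 : iteratedDeriv e (fun z => G2 z * G2 z + (-1:ℂ) * (G1 z * G1 z)) ζ
        = iteratedDeriv e (fun z => G2 z * G2 z) ζ
          + iteratedDeriv e (fun z => (-1:ℂ) * (G1 z * G1 z)) ζ :=
      (ev_add an_S1 an_S2 e).self_of_nhds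
    have T3 : iteratedDeriv e (fun z => (-1:ℂ) * (G1 z * G1 z)) ζ
        = (-1:ℂ) * iteratedDeriv e (fun z => G1 z * G1 z) ζ :=
      (ev_smul (-1:ℂ) (hG1.mul hG1) e).self_of_nhds
    have T4 : iteratedDeriv e (fun z => G2 z * G2 z) ζ
        = ∑ k ∈ Finset.range (e+1), (e.choose k : ℂ) *
            iteratedDeriv k G2 ζ * iteratedDeriv (e-k) G2 ζ :=
      (ev_mul hG2 hG2 e).self_of_nhds
    have T5 : iteratedDeriv e (fun z => G1 z * G1 z) ζ
        = ∑ k ∈ Finset.range (e+1), (e.choose k : ℂ) *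
            iteratedDeriv k G1 ζ * iteratedDeriv (e-k) G1 ζ :=
      (ev_mul hG1 hG1 e).self_of_nhds
    have T6 : iteratedDeriv e (fun z => (deriv G1 z + deriv G2 z) + (-A)) ζ
        = iteratedDeriv e (fun z => deriv G1 z + deriv G2 z) ζ
          + iteratedDeriv e (fun _ : ℂ => -A) ζ :=
      (ev_add an_S3 analyticAt_const e).self_of_nhds
    have T7 : iteratedDeriv e (fun z => deriv G1 z + deriv G2 z) ζ
        = iteratedDeriv e (deriv G1) ζ + iteratedDeriv e (deriv G2) ζ :=
      (ev_add an_G1d an_G2d e).self_of_nhds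
    have T8 : iteratedDeriv e (deriv G1) ζ = iteratedDeriv (e+1) G1 ζ := by
      rw [← iteratedDeriv_succ']
    have T8' : iteratedDeriv e (deriv G2) ζ = iteratedDeriv (e+1) G2 ζ := by
      rw [← iteratedDeriv_succ']
    have T9 : iteratedDeriv e (fun _ : ℂ => -A) ζ = 0 := by
      rw [itD_const]; simp [he0]
    have E3 : iteratedDeriv e (fun z => (G2 z * G2 z + (-1:ℂ) * (G1 z * G1 z))
          + ((deriv G1 z + deriv G2 z) + (-A))) ζ
        = (∑ k ∈ Finset.range (e+1), (e.choose k : ℂ) *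
              iteratedDeriv k G2 ζ * iteratedDeriv (e-k) G2 ζ
           - ∑ k ∈ Finset.range (e+1), (e.choose k : ℂ) *
              iteratedDeriv k G1 ζ * iteratedDeriv (e-k) G1 ζ)
          + (iteratedDeriv (e+1) G1 ζ + iteratedDeriv (e+1) G2 ζ) := by
      rw [T1, T2, T3, T4, T5, T6, T7, T8, T8', T9]
      ring
    have h := hHd (e+1)
    rw [E0, E1, E2] at h
    have hsub : e + 1 - 1 = e := by omega
    rw [hsub] at h
    rw [E3] at h
    have hsub2 : ∀ k, e + 1 - 1 - k = e - k := by intro k; omega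
    simp only [hsub, hsub2]
    push_cast at h ⊢
    linear_combination h


end DCaux

open Filter
open Fin.NatCast Fin.CommRing

/-- Let `(w_0,…,w_{2n} | a_0,…,a_{2n})` be a rational solution of a
(2n+1)-cyclic dressing chain with shift `Δ ≠ 0`, with each `w_i + w_{i+1}` not identically
zero, and let `ζ` be a pole of some `w_i`. Writing `w_j(z) = m_j/(z−ζ) + g_j(z)` with
`m_j ∈ ℤ` and `g_j` analytic at `ζ`, all the even-order derivatives `g_j^{(2ℓ)}(ζ)` vanish
for `0 ≤ ℓ ≤ |m_j| − 1` (equivalently `Res_ζ w_j^{2r} = 0` for `r = 1,…,|m_j|`). -/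
theorem rational_dressing_chain_even_coefficients (n : ℕ) (Δ : ℂ) (hΔ : Δ ≠ 0)
    (w : Fin (2 * n + 1) → ℂ → ℂ) (a : Fin (2 * n + 1) → ℂ)
    (p q : Fin (2 * n + 1) → Polynomial ℂ)
    (hq : ∀ i, q i ≠ 0)
    (hcop : ∀ i, IsCoprime (p i) (q i))
    (hw : ∀ i z, (q i).eval z ≠ 0 → w i z = (p i).eval z / (q i).eval z)
    (hchain : ∀ z : ℂ, (∀ j, (q j).eval z ≠ 0) → ∀ i : Fin (2 * n + 1),
      deriv (fun t => w i t + w (i + 1) t) z + (w (i + 1) z) ^ 2 - (w i z) ^ 2 = a i)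
    (hsum : ∑ i, a i = -Δ)
    (hnz : ∀ i : Fin (2 * n + 1), ∃ z : ℂ,
      (∀ j, (q j).eval z ≠ 0) ∧ w i z + w (i + 1) z ≠ 0)
    (ζ : ℂ)
    (hpole : ∃ i₀ : Fin (2 * n + 1),
      Tendsto (fun z => ‖w i₀ z‖) (nhdsWithin ζ {ζ}ᶜ) atTop)
    (m : Fin (2 * n + 1) → ℤ) (g : Fin (2 * n + 1) → ℂ → ℂ)
    (hg : ∀ j, AnalyticAt ℂ (g j) ζ)
    (hdec : ∀ j, ∀ᶠ z in nhdsWithin ζ {ζ}ᶜ, w j z = (m j : ℂ) / (z - ζ) + g j z) :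
    ∀ (j : Fin (2 * n + 1)) (ℓ : ℕ), ℓ < (m j).natAbs →
      iteratedDeriv (2 * ℓ) (g j) ζ = 0 := by
  classical
  -- eventually all denominators are nonzero near ζ
  have hqev : ∀ᶠ z in nhdsWithin ζ {ζ}ᶜ, ∀ j, (q j).eval z ≠ 0 := by
    rw [eventually_all]
    intro j
    have han : AnalyticAt ℂ (fun z => (q j).eval z) ζ := by
      have := (analyticAt_id (𝕜 := ℂ) (z := ζ)).aeval_polynomial (q j)
      simpa using this
    rcases han.eventually_eq_zero_or_eventually_ne_zero with h | h
    · exfalso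
      apply hq j
      exact Polynomial.eq_zero_of_infinite_isRoot _ (infinite_of_mem_nhds ζ h)
    · exact h
  -- local coefficients
  set c : Fin (2 * n + 1) → ℕ → ℂ := fun j k => iteratedDeriv k (g j) ζ with hc
  set B : Fin (2 * n + 1) → ℕ → ℂ := fun j d => ∑ k ∈ Finset.range d,
    ((d-1).choose k : ℂ) * iteratedDeriv k (g j) ζ * iteratedDeriv (d-1-k) (g j) ζ with hB
  -- apply the core lemma to every link
  have CORE : ∀ i : Fin (2 * n + 1),
      (m (i+1)^2 - (m i)^2 - m i - m (i+1) : ℤ) = 0 ∧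
      ∀ d : ℕ, d ≠ 1 →
        (2*((m (i+1)):ℂ) + (d:ℂ)) * c (i+1) d + ((d:ℂ) - 2*((m i):ℂ)) * c i d
          + (d:ℂ) * (B (i+1) d - B i d) = 0 := by
    intro i
    have hW : ∀ᶠ z in nhdsWithin ζ {ζ}ᶜ,
        (fun t => w i t + w (i+1) t) z
          = ((m i):ℂ)/(z-ζ) + g i z + (((m (i+1)):ℂ)/(z-ζ) + g (i+1) z) := by
      filter_upwards [hdec i, hdec (i+1)] with z h1 h2
      simp only [h1, h2]
    have hch : ∀ᶠ z in nhdsWithin ζ {ζ}ᶜ,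
        deriv (fun t => w i t + w (i+1) t) z
          + (((m (i+1)):ℂ)/(z-ζ) + g (i+1) z)^2 - (((m i):ℂ)/(z-ζ) + g i z)^2 = a i := by
      filter_upwards [hqev, hdec i, hdec (i+1)] with z h1 h2 h3
      have := hchain z h1 i
      rw [h2, h3] at this
      exact this
    exact DCaux.dressing_core ζ (a i) (m i) (m (i+1)) (g i) (g (i+1))
      (fun t => w i t + w (i+1) t) (hg i) (hg (i+1)) hW hch
  -- admissibility
  have adm : ∀ i : Fin (2 * n + 1), m (i+1) = - m i ∨ m (i+1) = m i + 1 := by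
    intro i
    have h := (CORE i).1
    have h2 : (m (i+1) + m i) * (m (i+1) - m i - 1) = 0 := by linear_combination h
    rcases mul_eq_zero.mp h2 with h3 | h3
    · left; omega
    · right; omega
  -- an odd admissible cycle contains a zero residue
  have hzero : ∃ i0 : Fin (2 * n + 1), m i0 = 0 := by
    by_contra hno
    push_neg at hno
    set F : ℤ → ZMod 2 := fun t => (t : ZMod 2) + if 0 < t then 1 else 0 with hF
    have step : ∀ i : Fin (2 * n + 1), F (m (i+1)) = F (m i) + 1 := by
      intro i
      have hti : m i ≠ 0 := hno i
      have hti1 : m (i+1) ≠ 0 := hno (i+1)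
      have h2 : ((1:ZMod 2) + 1) = 0 := by decide
      rcases adm i with h | h
      · rw [h, hF]
        simp only
        rcases lt_trichotomy (m i) 0 with hlt | he | hgt
        · rw [if_pos (by omega : (0:ℤ) < -(m i)), if_neg (by omega : ¬ (0:ℤ) < m i)]
          push_cast
          linear_combination -((m i : ℤ) : ZMod 2) * h2
        · exact absurd he hti
        · rw [if_neg (by omega : ¬ (0:ℤ) < -(m i)), if_pos hgt]
          push_cast
          linear_combination -((m i : ℤ) : ZMod 2) * h2 - h2
      · rw [h, hF]
        simp only
        have hiff : (0 < m i + 1) ↔ (0 < m i) := by omega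
        by_cases hpos : 0 < m i
        · rw [if_pos (hiff.mpr hpos), if_pos hpos]
          push_cast
          ring
        · rw [if_neg (fun hh => hpos (hiff.mp hh)), if_neg hpos]
          push_cast
          ring
    have hsum1 : ∑ i : Fin (2 * n + 1), F (m (i+1)) = ∑ i : Fin (2 * n + 1), F (m i) :=
      Fintype.sum_equiv (Equiv.addRight (1 : Fin (2 * n + 1)))
        (fun i => F (m (i+1))) (fun i => F (m i)) (fun i => rfl)
    have hsum2 : ∑ i : Fin (2 * n + 1), F (m (i+1))
        = ∑ i : Fin (2 * n + 1), F (m i) + ((2*n+1 : ℕ) : ZMod 2) := by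
      calc ∑ i : Fin (2 * n + 1), F (m (i+1)) = ∑ i : Fin (2 * n + 1), (F (m i) + 1) :=
            Finset.sum_congr rfl (fun i _ => step i)
        _ = ∑ i : Fin (2 * n + 1), F (m i) + ((2*n+1 : ℕ) : ZMod 2) := by
            rw [Finset.sum_add_distrib]
            simp [Finset.card_univ]
    have hNzero : ((2*n+1 : ℕ) : ZMod 2) = 0 := by
      have := hsum1.symm.trans hsum2
      exact (left_eq_add.mp this)
    have : ((2*n+1 : ℕ) : ZMod 2) = 1 := by
      push_cast
      rw [show ((2:ZMod 2)) = 0 from rfl]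
      ring
    rw [this] at hNzero
    exact one_ne_zero hNzero
  -- main induction
  have MAIN : ∀ ℓ : ℕ, ∀ j : Fin (2 * n + 1), ℓ < (m j).natAbs → c j (2*ℓ) = 0 := by
    intro ℓ
    induction ℓ using Nat.strong_induction_on with
    | _ ℓ IH =>
      -- vanishing of the quadratic sums
      have hB0 : ∀ j : Fin (2 * n + 1), ℓ ≤ (m j).natAbs → B j (2*ℓ) = 0 := by
        intro j hj
        rw [hB]
        apply Finset.sum_eq_zero
        intro k hk
        have hk2 : k < 2*ℓ := Finset.mem_range.mp hk
        rcases Nat.even_or_odd k with ⟨t, ht⟩ | ⟨t, ht⟩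
        · have h1 : k = 2*t := by omega
          have h2 : t < ℓ := by omega
          have h3 : iteratedDeriv k (g j) ζ = 0 := by
            rw [h1]
            exact IH t h2 j (lt_of_lt_of_le h2 hj)
          rw [h3]
          ring
        · have h1 : 2*ℓ - 1 - k = 2*(ℓ - t - 1) := by omega
          have h2 : ℓ - t - 1 < ℓ := by omega
          have h3 : iteratedDeriv (2*ℓ-1-k) (g j) ζ = 0 := by
            rw [h1]
            exact IH (ℓ - t - 1) h2 j (lt_of_lt_of_le h2 hj)
          rw [h3]
          ring
      -- the relation at even order 2ℓ
      have REL : ∀ i : Fin (2 * n + 1),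
          (2*((m (i+1)):ℂ) + ((2*ℓ : ℕ):ℂ)) * c (i+1) (2*ℓ)
            + (((2*ℓ : ℕ):ℂ) - 2*((m i):ℂ)) * c i (2*ℓ)
            + ((2*ℓ : ℕ):ℂ) * (B (i+1) (2*ℓ) - B i (2*ℓ)) = 0 :=
        fun i => (CORE i).2 (2*ℓ) (by omega)
      -- anchored base step
      have hbase : ∀ j : Fin (2 * n + 1), ℓ < (m j).natAbs →
          (m (j-1)).natAbs ≤ ℓ → c j (2*ℓ) = 0 := by
        intro j hj hj1
        have hadj : (j-1) + 1 = j := sub_add_cancel j 1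
        have hadm := adm (j-1)
        rw [hadj] at hadm
        have hmj1 : m (j-1) = (ℓ:ℤ) ∧ m j = (ℓ:ℤ) + 1 := by
          rcases hadm with h | h
          · exfalso; omega
          · constructor <;> omega
        have hrel := REL (j-1)
        rw [hadj] at hrel
        have hz1 : (((2*ℓ : ℕ):ℂ) - 2*((m (j-1)):ℂ)) = 0 := by
          rw [hmj1.1]
          push_cast
          ring
        have hz2 : B (j-1) (2*ℓ) = 0 := hB0 (j-1) (by omega)
        have hz3 : B j (2*ℓ) = 0 := hB0 j (le_of_lt hj)
        rw [hz1, hz2, hz3] at hrel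
        simp only [zero_mul, add_zero, sub_zero, mul_zero] at hrel
        have hco : (2*((m j):ℂ) + ((2*ℓ : ℕ):ℂ)) ≠ 0 := by
          have : ((2*(m j) + 2*(ℓ:ℤ) : ℤ) : ℂ) ≠ 0 :=
            Int.cast_ne_zero.mpr (by omega)
          convert this using 1
          push_cast
          ring
        exact (mul_eq_zero.mp hrel).resolve_left hco
      -- propagation along runs of large residues
      have hprop : ∀ s : ℕ, ∀ j : Fin (2 * n + 1), ℓ < (m j).natAbs →
          (m (j - ((s+1 : ℕ) : Fin (2 * n + 1)))).natAbs ≤ ℓ → c j (2*ℓ) = 0 := by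
        intro s
        induction s with
        | zero =>
          intro j hj hfar
          apply hbase j hj
          simpa using hfar
        | succ s ihs =>
          intro j hj hfar
          by_cases hnear : (m (j-1)).natAbs ≤ ℓ
          · exact hbase j hj hnear
          · push_neg at hnear
            have hc1 : c (j-1) (2*ℓ) = 0 := by
              apply ihs (j-1) hnear
              have hEq : (j - 1) - ((s+1 : ℕ) : Fin (2 * n + 1))
                  = j - ((s+1+1 : ℕ) : Fin (2 * n + 1)) := by
                push_cast
                rw [sub_sub]
                ring_nf
              rw [hEq]
              exact hfar
            have hadj : (j-1) + 1 = j := sub_add_cancel j 1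
            have hrel := REL (j-1)
            rw [hadj] at hrel
            have hz2 : B (j-1) (2*ℓ) = 0 := hB0 (j-1) (le_of_lt hnear)
            have hz3 : B j (2*ℓ) = 0 := hB0 j (le_of_lt hj)
            rw [hz2, hz3, hc1] at hrel
            simp only [mul_zero, add_zero, sub_zero, zero_sub, mul_neg, neg_zero] at hrel
            have hco : (2*((m j):ℂ) + ((2*ℓ : ℕ):ℂ)) ≠ 0 := by
              have : ((2*(m j) + 2*(ℓ:ℤ) : ℤ) : ℂ) ≠ 0 :=
                Int.cast_ne_zero.mpr (by omega)
              convert this using 1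
              push_cast
              ring
            exact (mul_eq_zero.mp hrel).resolve_left hco
      -- conclusion of the induction step
      intro j hj
      obtain ⟨i0, hi0⟩ := hzero
      have hji : j ≠ i0 := by
        intro h
        rw [h, hi0] at hj
        simp at hj
      have ht : j - i0 ≠ 0 := sub_ne_zero.mpr hji
      have htv : 1 ≤ (j - i0).val := by
        rcases Nat.eq_zero_or_pos (j - i0).val with h | h
        · exact absurd (Fin.ext (by simp [h])) ht
        · exact h
      apply hprop ((j - i0).val - 1) j hj
      have hcast : (((j - i0).val - 1 + 1 : ℕ) : Fin (2 * n + 1)) = j - i0 := by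
        rw [Nat.sub_add_cancel htv, Fin.cast_val_eq_self]
      rw [hcast, sub_sub_cancel, hi0]
      simp
  intro j ℓ hℓ
  exact MAIN ℓ j hℓ
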